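/- Let δ ≥ 0, p ∈ (1,∞), and for a ≥ 0 define the shifted N-function φ_a by φ_a(0)=0 and φ_a'(t) = φ'(a+t)·t/(a+t), where φ'(t) = (δ+t)^(p-2) t. Then for every a ≥ 0, the function φ_a is convex and nondecreasing on [0,∞). -/

import Mathlib

/-- The shifted N-function `φ_a(t) = ∫₀ᵗ φ'(a+s)·s/(a+s) ds`, where `φ'(t) = (δ+t)^(p-2) t`. -/
noncomputable def shiftedN (δ p a : ℝ) (t : ℝ) : ℝ :=
  ∫ s in (0:ℝ)..t, (δ + (a + s)) ^ (p - 2) * (a + s) * (s / (a + s))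

/-- for `δ ≥ 0`, `p ∈ (1,∞)` and every shift `a ≥ 0`, the shifted N-function
`φ_a` is convex and nondecreasing on `[0,∞)`. -/
theorem shiftedN_convex_monotone (δ p : ℝ) (hδ : 0 ≤ δ) (hp : 1 < p) :
    ∀ a : ℝ, 0 ≤ a →
      ConvexOn ℝ (Set.Ici (0:ℝ)) (shiftedN δ p a) ∧
      MonotoneOn (shiftedN δ p a) (Set.Ici (0:ℝ)) := by
  intro a ha
  set c : ℝ := δ + a with hc
  have hc0 : 0 ≤ c := by positivity
  set g : ℝ → ℝ := fun s => (c + s) ^ (p - 2) * s with hg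
  have hgnn : ∀ s, 0 ≤ s → 0 ≤ g s := by
    intro s hs
    exact mul_nonneg (Real.rpow_nonneg (by linarith) _) hs
  -- rewrite g using the exponent p-1
  have hrw : ∀ s : ℝ, 0 < s → g s = (c + s) ^ (p - 1) * (s / (c + s)) := by
    intro s hs
    have hcs : 0 < c + s := by linarith
    have h1 : (c + s) ^ (p - 1) = (c + s) ^ (p - 2) * (c + s) := by
      rw [show p - 1 = (p - 2) + 1 by ring, Real.rpow_add_one hcs.ne']
    rw [h1]
    simp only [hg]
    field_simp
  have hgmono : ∀ s t, 0 ≤ s → s ≤ t → g s ≤ g t := by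
    intro s t hs hst
    rcases hs.eq_or_lt with rfl | hs'
    · simpa [hg] using hgnn t (by linarith)
    · have hcs : 0 < c + s := by linarith
      have hct : 0 < c + t := by linarith
      rw [hrw s hs', hrw t (lt_of_lt_of_le hs' hst)]
      have h1 : (c + s) ^ (p - 1) ≤ (c + t) ^ (p - 1) :=
        Real.rpow_le_rpow hcs.le (by linarith) (by linarith)
      have h2 : s / (c + s) ≤ t / (c + t) := by
        rw [div_le_div_iff₀ hcs hct]; nlinarith
      exact mul_le_mul h1 h2 (div_nonneg hs'.le hcs.le) (Real.rpow_nonneg hct.le _)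
  -- continuity of g on [0,∞)
  have hgcont : ContinuousOn g (Set.Ici (0:ℝ)) := by
    rcases hc0.eq_or_lt with hceq | hcpos
    · have heq : Set.EqOn g (fun s : ℝ => s ^ (p - 1)) (Set.Ici (0:ℝ)) := by
        intro s hs
        have hs0 : (0:ℝ) ≤ s := hs
        rcases hs0.eq_or_lt with rfl | hs'
        · simp [hg, Real.zero_rpow (ne_of_gt (by linarith : (0:ℝ) < p - 1)), ← hceq]
        · have hcs : c + s = s := by rw [← hceq]; ring
          simp only [hg, hcs]
          rw [show p - 1 = (p - 2) + 1 by ring, Real.rpow_add_one hs'.ne']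
      have hcont : ContinuousOn (fun s : ℝ => s ^ (p - 1)) (Set.Ici (0:ℝ)) :=
        continuousOn_id.rpow_const (fun x _ => Or.inr (by linarith))
      exact hcont.congr heq
    · have : ContinuousOn (fun s : ℝ => (c + s) ^ (p - 2)) (Set.Ici (0:ℝ)) :=
        (continuousOn_const.add continuousOn_id).rpow_const
          (fun x hx => Or.inl (by have : (0:ℝ) ≤ x := hx; exact ne_of_gt (by show (0:ℝ) < c + x; linarith)))
      exact this.mul continuousOn_id
  -- shiftedN agrees with the integral of g on [0,∞)
  have key : ∀ t : ℝ, 0 ≤ t → shiftedN δ p a t = ∫ s in (0:ℝ)..t, g s := by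
    intro t ht
    apply intervalIntegral.integral_congr
    intro s hs
    rw [Set.uIcc_of_le ht] at hs
    have hs0 : 0 ≤ s := hs.1
    have he : δ + (a + s) = c + s := by rw [hc]; ring
    rcases (add_nonneg ha hs0).eq_or_lt with h0 | hpos
    · have ha0 : a = 0 := by linarith
      have hs0' : s = 0 := by linarith
      simp [hg, ha0, hs0']
    · simp only [hg, he]
      field_simp
  -- interval integrability of g on subintervals of [0,∞)
  have hInt : ∀ x y : ℝ, 0 ≤ x → x ≤ y → IntervalIntegrable g MeasureTheory.volume x y := by
    intro x y hx hxy
    apply ContinuousOn.intervalIntegrable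
    apply hgcont.mono
    rw [Set.uIcc_of_le hxy]
    intro u hu
    exact le_trans hx hu.1
  have hsplit : ∀ x y : ℝ, 0 ≤ x → x ≤ y →
      shiftedN δ p a y = shiftedN δ p a x + ∫ s in x..y, g s := by
    intro x y hx hxy
    rw [key x hx, key y (le_trans hx hxy)]
    rw [intervalIntegral.integral_add_adjacent_intervals (hInt 0 x le_rfl hx) (hInt x y hx hxy)]
  constructor
  · apply convexOn_of_slope_mono_adjacent (convex_Ici (0:ℝ))
    intro x y z hx hz hxy hyz
    have hx0 : (0:ℝ) ≤ x := hx
    have hy0 : (0:ℝ) ≤ y := le_trans hx0 hxy.le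
    have e1 : shiftedN δ p a y - shiftedN δ p a x = ∫ s in x..y, g s := by
      rw [hsplit x y hx0 hxy.le]; ring
    have e2 : shiftedN δ p a z - shiftedN δ p a y = ∫ s in y..z, g s := by
      rw [hsplit y z hy0 hyz.le]; ring
    have b1 : (∫ s in x..y, g s) ≤ (y - x) * g y := by
      have h := intervalIntegral.integral_mono_on hxy.le (hInt x y hx0 hxy.le)
        (intervalIntegrable_const) (fun u hu => hgmono u y (le_trans hx0 hu.1) hu.2)
      rwa [intervalIntegral.integral_const, smul_eq_mul] at h
    have b2 : (z - y) * g y ≤ ∫ s in y..z, g s := by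
      have h := intervalIntegral.integral_mono_on hyz.le (intervalIntegrable_const)
        (hInt y z hy0 hyz.le) (fun u hu => hgmono y u hy0 hu.1)
      rwa [intervalIntegral.integral_const, smul_eq_mul] at h
    rw [e1, e2]
    rw [div_le_div_iff₀ (by linarith) (by linarith)]
    calc (∫ s in x..y, g s) * (z - y) ≤ ((y - x) * g y) * (z - y) := by
          apply mul_le_mul_of_nonneg_right b1 (by linarith)
      _ = ((z - y) * g y) * (y - x) := by ring
      _ ≤ (∫ s in y..z, g s) * (y - x) := by
          apply mul_le_mul_of_nonneg_right b2 (by linarith)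
  · intro x hx y hy hxy
    have hx0 : (0:ℝ) ≤ x := hx
    rw [hsplit x y hx0 hxy]
    have : 0 ≤ ∫ s in x..y, g s :=
      intervalIntegral.integral_nonneg hxy (fun u hu => hgnn u (le_trans hx0 hu.1))
    linarith
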